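/- For every multi-index k = (k_1,…,k_l) of nonnegative integers with all k_j ≥ 1 in the relevant entries, the function χ̃_k satisfies the recurrence z · χ̃_k(z) = Σ_{j=1}^l (c_j + k_j) · χ̃_{k − e_j}(z), where e_j is the j-th standard unit vector. -/

import Mathlib

open MeasureTheory

/-- The union of cuts `B = ∪_j {a j t : t ≥ 1}`. -/
def cutSet (l : ℕ) (a : Fin l → ℂ) : Set ℂ :=
  ⋃ j, {z : ℂ | ∃ t : ℝ, 1 ≤ t ∧ z = a j * t}

/-- The integrand `∏_j (s - ā_j)^(k_j) · W̄(s) · e^{-zs}`. -/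
noncomputable def chiIntegrand (l : ℕ) (a : Fin l → ℂ) (Wb : ℂ → ℂ)
    (k : Fin l → ℕ) (z s : ℂ) : ℂ :=
  (∏ j, (s - starRingEnd ℂ (a j)) ^ (k j)) * Wb s * Complex.exp (-(z * s))

/-- `χ̃_k(z) = W(z) ∫_{ā₁}^{z̄·∞} ∏_j (s-ā_j)^(k_j) W̄(s) e^{-zs} ds`, the contour
being the segment from `ā₁` to `z̄` followed by the ray `{z̄ t : t ≥ 1}`. -/
noncomputable def chiTilde (l : ℕ) (a : Fin l → ℂ) (W Wb : ℂ → ℂ) (abar1 : ℂ)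
    (k : Fin l → ℕ) (z : ℂ) : ℂ :=
  W z *
    ((∫ t in (0:ℝ)..1,
        chiIntegrand l a Wb k z (abar1 + (t : ℂ) * (starRingEnd ℂ z - abar1))) *
        (starRingEnd ℂ z - abar1) +
      (∫ t in Set.Ioi (1 : ℝ), chiIntegrand l a Wb k z (starRingEnd ℂ z * t)) *
        starRingEnd ℂ z)

/-- Compatibility: the complex absolute value as a bundled absolute value. -/
noncomputable def Complex.abs : AbsoluteValue ℂ ℝ := NormedField.toAbsoluteValue ℂ

lemma Complex.norm_eq_abs (z : ℂ) : ‖z‖ = Complex.abs z := rfl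

lemma Complex.abs_conj (z : ℂ) : Complex.abs (starRingEnd ℂ z) = Complex.abs z :=
  Complex.norm_conj z

lemma Complex.abs_ofReal (r : ℝ) : Complex.abs (r : ℂ) = |r| := Complex.norm_real r

lemma Complex.abs_exp (z : ℂ) : Complex.abs (Complex.exp z) = Real.exp z.re :=
  Complex.norm_exp z

lemma Complex.abs_re_le_abs (z : ℂ) : |z.re| ≤ Complex.abs z := Complex.abs_re_le_norm z

lemma Complex.continuous_abs : Continuous (fun z : ℂ => Complex.abs z) := continuous_norm

section Helpers
open Complex Set Filter Asymptotics

lemma cutSet_isClosed (l : ℕ) (a : Fin l → ℂ) (ha0 : ∀ i, a i ≠ 0) :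
    IsClosed (cutSet l a) := by
  apply isClosed_iUnion_of_finite
  intro j
  have : {z : ℂ | ∃ t : ℝ, 1 ≤ t ∧ z = a j * t}
      = (LinearMap.toSpanSingleton ℝ ℂ (a j)) '' (Set.Ici 1) := by
    ext w
    constructor
    · rintro ⟨t, ht, rfl⟩
      exact ⟨t, ht, by simp [LinearMap.toSpanSingleton_apply, smul_eq_mul, mul_comm]⟩
    · rintro ⟨t, ht, rfl⟩
      exact ⟨t, ht, by simp [LinearMap.toSpanSingleton_apply, smul_eq_mul, mul_comm]⟩
  rw [this]
  have hinj : LinearMap.ker (LinearMap.toSpanSingleton ℝ ℂ (a j)) = ⊥ := by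
    rw [LinearMap.ker_eq_bot]
    intro s t hst
    simp only [LinearMap.toSpanSingleton_apply] at hst
    have := ha0 j
    rw [← sub_eq_zero, ← sub_smul, smul_eq_zero, sub_eq_zero] at hst
    rcases hst with h | h
    · exact h
    · exact absurd h this
  exact ((LinearMap.toSpanSingleton ℝ ℂ (a j)).isClosedEmbedding_of_injective
    hinj).isClosedMap _ isClosed_Ici

lemma mem_cutSet_self (l : ℕ) (a : Fin l → ℂ) (j : Fin l) : a j ∈ cutSet l a :=
  Set.mem_iUnion.mpr ⟨j, ⟨1, le_refl _, by simp⟩⟩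

lemma hasDerivAt_conj_conj {f : ℂ → ℂ} {f' : ℂ} {x : ℂ}
    (h : HasDerivAt f f' ((starRingEnd ℂ) x)) :
    HasDerivAt (fun s => (starRingEnd ℂ) (f ((starRingEnd ℂ) s))) ((starRingEnd ℂ) f') x := by
  rw [hasDerivAt_iff_isLittleO] at h ⊢
  have hc : Filter.Tendsto (fun s : ℂ => (starRingEnd ℂ) s) (nhds x)
      (nhds ((starRingEnd ℂ) x)) := (continuous_star.tendsto x)
  have h2 := h.comp_tendsto hc
  rw [Asymptotics.isLittleO_iff] at h2 ⊢
  intro ε hε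
  filter_upwards [h2 hε] with s hs
  have key : (starRingEnd ℂ) (f ((starRingEnd ℂ) s)) - (starRingEnd ℂ) (f ((starRingEnd ℂ) x))
      - (s - x) • (starRingEnd ℂ) f'
      = (starRingEnd ℂ) (f ((starRingEnd ℂ) s) - f ((starRingEnd ℂ) x)
        - ((starRingEnd ℂ) s - (starRingEnd ℂ) x) • f') := by
    simp [smul_eq_mul, map_sub, map_mul]
  rw [key, RCLike.norm_conj]
  have hn : ‖s - x‖ = ‖(starRingEnd ℂ) s - (starRingEnd ℂ) x‖ := by
    rw [← map_sub, RCLike.norm_conj]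
  rw [hn]
  simpa [smul_eq_mul] using hs

lemma W_hasDerivAt (l : ℕ) (hl : 0 < l) (a : Fin l → ℂ) (ha0 : ∀ i, a i ≠ 0)
    (c : Fin l → ℝ) (hc : ∀ i, 0 < c i)
    (W : ℂ → ℂ) (hW : DifferentiableOn ℂ W (cutSet l a)ᶜ)
    (hWabs : ∀ z ∉ cutSet l a,
      Complex.abs (W z) = ∏ j, (Complex.abs (z - a j)) ^ (c j))
    (u : ℂ) (hu : u ∉ cutSet l a) :
    HasDerivAt W (W u * ∑ j, (c j : ℂ) / (u - a j)) u := by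
  haveI : Nonempty (Fin l) := ⟨⟨0, hl⟩⟩
  have hopen : IsOpen (cutSet l a)ᶜ := (cutSet_isClosed l a ha0).isOpen_compl
  have huj : ∀ j, u ≠ a j := fun j h => hu (h ▸ mem_cutSet_self l a j)
  have huj' : ∀ j, u - a j ≠ 0 := fun j => sub_ne_zero.mpr (huj j)
  obtain ⟨r₁, hr₁, hball₁⟩ := Metric.isOpen_iff.mp hopen u hu
  set δ : ℝ := Finset.univ.inf' Finset.univ_nonempty (fun j => Complex.abs (u - a j)) with hδdef
  have hδpos : 0 < δ := by
    rw [hδdef, Finset.lt_inf'_iff]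
    intro j _
    exact AbsoluteValue.pos _ (huj' j)
  have hδle : ∀ j, δ ≤ Complex.abs (u - a j) := fun j =>
    Finset.inf'_le _ (Finset.mem_univ j)
  set r : ℝ := min r₁ (δ / 2) with hrdef
  have hrpos : 0 < r := lt_min hr₁ (by linarith)
  have hrsub : Metric.ball u r ⊆ (cutSet l a)ᶜ :=
    Subset.trans (Metric.ball_subset_ball (min_le_left _ _)) hball₁
  have hrδ : r ≤ δ / 2 := min_le_right _ _
  -- basic estimates on the ball
  have hvj : ∀ v ∈ Metric.ball u r, ∀ j, v - a j ≠ 0 := by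
    intro v hv j
    have h1 : Complex.abs (v - u) < r := by
      simpa [Complex.dist_eq, Complex.norm_eq_abs] using Metric.mem_ball.mp hv
    have h2 : Complex.abs (u - a j) ≤ Complex.abs (u - v) + Complex.abs (v - a j) := by
      simpa using Complex.abs.sub_le u v (a j)
    have h3 : Complex.abs (u - v) = Complex.abs (v - u) := by
      rw [← Complex.abs.map_neg]; ring_nf
    intro h0
    rw [h0] at h2
    simp only [map_zero, add_zero] at h2
    rw [h3] at h2
    have := hδle j
    linarith
  have hslit : ∀ v ∈ Metric.ball u r, ∀ j, (v - a j) / (u - a j) ∈ Complex.slitPlane := by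
    intro v hv j
    have h1 : Complex.abs (v - u) < r := by
      simpa [Complex.dist_eq, Complex.norm_eq_abs] using Metric.mem_ball.mp hv
    have hradd : (v - a j) / (u - a j) = 1 + (v - u) / (u - a j) := by
      rw [← div_self (huj' j), ← add_div]
      ring_nf
    have habs : Complex.abs ((v - u) / (u - a j)) < 1 := by
      rw [map_div₀]
      rw [div_lt_one (AbsoluteValue.pos _ (huj' j))]
      have := hδle j
      linarith
    rw [Complex.mem_slitPlane_iff]
    left
    rw [hradd]
    simp only [Complex.add_re, Complex.one_re]
    have h4 := Complex.abs_re_le_abs ((v - u) / (u - a j))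
    have h5 := neg_abs_le ((v - u) / (u - a j)).re
    linarith
  -- local branches of log(v - a j)
  set L : Fin l → ℂ → ℂ := fun j v => Complex.log ((v - a j) / (u - a j)) + Complex.log (u - a j) with hLdef
  have hLderiv : ∀ j, ∀ v ∈ Metric.ball u r, HasDerivAt (L j) ((v - a j)⁻¹) v := by
    intro j v hv
    have inner : HasDerivAt (fun v => (v - a j) / (u - a j)) ((u - a j)⁻¹) v := by
      simpa using ((hasDerivAt_id v).sub_const (a j)).div_const (u - a j)
    have hlog := (Complex.hasDerivAt_log (hslit v hv j)).comp v inner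
    have : ((v - a j) / (u - a j))⁻¹ * (u - a j)⁻¹ = (v - a j)⁻¹ := by
      field_simp [hvj v hv j, huj' j]
    rw [this] at hlog
    simpa [hLdef] using hlog.add_const (Complex.log (u - a j))
  have hLre : ∀ j, ∀ v ∈ Metric.ball u r, (L j v).re = Real.log (Complex.abs (v - a j)) := by
    intro j v hv
    simp only [hLdef, Complex.add_re, Complex.log_re, Complex.norm_eq_abs, map_div₀]
    rw [Real.log_div (AbsoluteValue.ne_zero _ (hvj v hv j)) (AbsoluteValue.ne_zero _ (huj' j))]
    ring
  set P : ℂ → ℂ := fun v => Complex.exp (∑ j, (c j : ℂ) * L j v) with hPdef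
  have hP0 : ∀ v, P v ≠ 0 := fun v => Complex.exp_ne_zero _
  have hPabs : ∀ v ∈ Metric.ball u r,
      Complex.abs (P v) = ∏ j, (Complex.abs (v - a j)) ^ (c j) := by
    intro v hv
    rw [hPdef]
    simp only [Complex.abs_exp, Complex.re_sum]
    rw [Real.exp_sum]
    apply Finset.prod_congr rfl
    intro j _
    rw [show ((c j : ℂ) * L j v).re = c j * (L j v).re by
      simp [Complex.mul_re, Complex.ofReal_re, Complex.ofReal_im]]
    rw [hLre j v hv]
    rw [Real.rpow_def_of_pos (AbsoluteValue.pos _ (hvj v hv j))]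
    ring_nf
  have hPderiv : ∀ v ∈ Metric.ball u r,
      HasDerivAt P (P v * ∑ j, (c j : ℂ) / (v - a j)) v := by
    intro v hv
    have hsum : HasDerivAt (fun v => ∑ j, (c j : ℂ) * L j v)
        (∑ j, (c j : ℂ) * (v - a j)⁻¹) v := by
      apply HasDerivAt.fun_sum
      intro j _
      exact (hLderiv j v hv).const_mul _
    have := hsum.cexp
    simpa [hPdef, div_eq_mul_inv] using this
  -- the unimodular quotient
  set g : ℂ → ℂ := fun v => W v / P v with hgdef
  have hgabs : ∀ v ∈ Metric.ball u r, Complex.abs (g v) = 1 := by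
    intro v hv
    rw [hgdef]
    simp only [map_div₀]
    rw [hWabs v (hrsub hv), hPabs v hv]
    exact div_self (ne_of_gt (Finset.prod_pos fun j _ =>
      Real.rpow_pos_of_pos (AbsoluteValue.pos _ (hvj v hv j)) _))
  have hgdiff : DifferentiableOn ℂ g (Metric.ball u r) := by
    apply DifferentiableOn.div
    · exact hW.mono hrsub
    · intro v hv
      exact ((hPderiv v hv).differentiableAt.differentiableWithinAt)
    · intro v hv; exact hP0 v
  have hmax : IsMaxOn (norm ∘ g) (Metric.ball u r) u := by
    intro v hv
    simp only [Function.comp_apply, Set.mem_setOf_eq, Complex.norm_eq_abs]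
    rw [hgabs v hv, hgabs u (Metric.mem_ball_self hrpos)]
  have heq := Complex.eqOn_of_isPreconnected_of_isMaxOn_norm
    (convex_ball u r).isPreconnected Metric.isOpen_ball hgdiff
    (Metric.mem_ball_self hrpos) hmax
  have hWeq : ∀ v ∈ Metric.ball u r, W v = g u * P v := by
    intro v hv
    have := heq hv
    simp only [Function.const_apply] at this
    rw [← this]
    simp only [hgdef]
    rw [div_mul_cancel₀ _ (hP0 v)]
  have hWder : HasDerivAt W (g u * (P u * ∑ j, (c j : ℂ) / (u - a j))) u := by
    have hd : HasDerivAt (fun v => g u * P v)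
        (g u * (P u * ∑ j, (c j : ℂ) / (u - a j))) u :=
      (hPderiv u (Metric.mem_ball_self hrpos)).const_mul _
    apply hd.congr_of_eventuallyEq
    filter_upwards [Metric.ball_mem_nhds u hrpos] with v hv
    exact hWeq v hv
  have : g u * (P u * ∑ j, (c j : ℂ) / (u - a j))
      = W u * ∑ j, (c j : ℂ) / (u - a j) := by
    rw [hWeq u (Metric.mem_ball_self hrpos)]
    ring
  rwa [this] at hWder

variable (l : ℕ) (hl : 0 < l) (a : Fin l → ℂ) (ha0 : ∀ i, a i ≠ 0)
    (c : Fin l → ℝ) (hc : ∀ i, 0 < c i)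
    (W : ℂ → ℂ) (hW : DifferentiableOn ℂ W (cutSet l a)ᶜ)
    (hWabs : ∀ z ∉ cutSet l a,
      Complex.abs (W z) = ∏ j, (Complex.abs (z - a j)) ^ (c j))
    (Wb : ℂ → ℂ) (hWb : ∀ s, Wb s = starRingEnd ℂ (W (starRingEnd ℂ s)))

include hl ha0 hc hW hWabs hWb in
lemma Wb_hasDerivAt (s : ℂ) (hs : (starRingEnd ℂ) s ∉ cutSet l a) :
    HasDerivAt Wb (Wb s * ∑ j, (c j : ℂ) / (s - starRingEnd ℂ (a j))) s := by
  have hWs := W_hasDerivAt l hl a ha0 c hc W hW hWabs ((starRingEnd ℂ) s) hs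
  have hWb1 := hasDerivAt_conj_conj hWs
  have hWb2 : HasDerivAt Wb
      ((starRingEnd ℂ) (W ((starRingEnd ℂ) s) * ∑ j, (c j : ℂ) / ((starRingEnd ℂ) s - a j))) s :=
    hWb1.congr_of_eventuallyEq (Filter.Eventually.of_forall fun t => hWb t)
  have hconj_val : (starRingEnd ℂ) (W ((starRingEnd ℂ) s)
        * ∑ j, (c j : ℂ) / ((starRingEnd ℂ) s - a j))
      = Wb s * ∑ j, (c j : ℂ) / (s - (starRingEnd ℂ) (a j)) := by
    rw [map_mul, map_sum, ← hWb s]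
    congr 1
    apply Finset.sum_congr rfl
    intro j _
    rw [map_div₀, map_sub, Complex.conj_conj, Complex.conj_ofReal]
  rwa [hconj_val] at hWb2

lemma prod_sub_single (k : Fin l → ℕ) (hk : ∀ j, 1 ≤ k j)
    (s : ℂ) (j : Fin l) :
    (∏ i, (s - starRingEnd ℂ (a i)) ^ ((k - Pi.single j 1 : Fin l → ℕ) i))
      = (s - starRingEnd ℂ (a j)) ^ (k j - 1) *
        ∏ i ∈ Finset.univ.erase j, (s - starRingEnd ℂ (a i)) ^ (k i) := by
  rw [← Finset.mul_prod_erase Finset.univ _ (Finset.mem_univ j)]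
  congr 1
  · simp [Pi.sub_apply, Pi.single_apply]
  · apply Finset.prod_congr rfl
    intro i hi
    have hij : i ≠ j := Finset.ne_of_mem_erase hi
    simp [Pi.sub_apply, Pi.single_apply, hij]

lemma prod_eq_mul_sub_single (k : Fin l → ℕ) (hk : ∀ j, 1 ≤ k j)
    (s : ℂ) (j : Fin l) :
    (∏ i, (s - starRingEnd ℂ (a i)) ^ (k i))
      = (s - starRingEnd ℂ (a j)) *
        ∏ i, (s - starRingEnd ℂ (a i)) ^ ((k - Pi.single j 1 : Fin l → ℕ) i) := by
  rw [prod_sub_single l a k hk s j, ← mul_assoc, ← pow_succ',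
    Nat.sub_add_cancel (hk j)]
  exact (Finset.mul_prod_erase Finset.univ
    (fun i => (s - starRingEnd ℂ (a i)) ^ k i) (Finset.mem_univ j)).symm

include hl ha0 hc hW hWabs hWb in
lemma chiIntegrand_hasDerivAt (k : Fin l → ℕ) (hk : ∀ j, 1 ≤ k j) (z s : ℂ)
    (hs : (starRingEnd ℂ) s ∉ cutSet l a) :
    HasDerivAt (chiIntegrand l a Wb k z)
      (∑ j, ((c j : ℂ) + (k j : ℕ)) *
          chiIntegrand l a Wb (k - Pi.single j 1 : Fin l → ℕ) z s
        - z * chiIntegrand l a Wb k z s) s := by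
  have hsj : ∀ j, s - starRingEnd ℂ (a j) ≠ 0 := by
    intro j h
    apply hs
    have : (starRingEnd ℂ) s = a j := by
      have : s = starRingEnd ℂ (a j) := by linear_combination h
      rw [this, Complex.conj_conj]
    rw [this]
    exact mem_cutSet_self l a j
  have hWb2 := Wb_hasDerivAt l hl a ha0 c hc W hW hWabs Wb hWb s hs
  have hF : HasDerivAt (fun s => ∏ i, (s - starRingEnd ℂ (a i)) ^ (k i))
      (∑ j, (∏ i ∈ Finset.univ.erase j, (s - starRingEnd ℂ (a i)) ^ (k i)) •
        ((k j : ℂ) * (s - starRingEnd ℂ (a j)) ^ (k j - 1) * 1)) s := by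
    apply HasDerivAt.fun_finsetProd
    intro i _
    exact ((hasDerivAt_id s).sub_const (starRingEnd ℂ (a i))).pow (k i)
  have hE : HasDerivAt (fun s => Complex.exp (-(z * s)))
      (Complex.exp (-(z * s)) * (-z)) s := by
    have h1 : HasDerivAt (fun s : ℂ => -(z * s)) (-z) s := by
      simpa using ((hasDerivAt_id s).const_mul z).fun_neg
    exact h1.cexp
  have total := (hF.mul hWb2).mul hE
  have e1 : (∑ j, (∏ i ∈ Finset.univ.erase j, (s - starRingEnd ℂ (a i)) ^ (k i)) •
        ((k j : ℂ) * (s - starRingEnd ℂ (a j)) ^ (k j - 1) * 1))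
      = ∑ j, ((k j : ℂ) *
          ∏ i, (s - starRingEnd ℂ (a i)) ^ ((k - Pi.single j 1 : Fin l → ℕ) i)) := by
    apply Finset.sum_congr rfl
    intro j _
    rw [smul_eq_mul, prod_sub_single l a k hk s j]
    ring
  have e2 : (∏ i, (s - starRingEnd ℂ (a i)) ^ (k i)) *
        (Wb s * ∑ j, (c j : ℂ) / (s - starRingEnd ℂ (a j)))
      = (∑ j, ((c j : ℂ) *
          ∏ i, (s - starRingEnd ℂ (a i)) ^ ((k - Pi.single j 1 : Fin l → ℕ) i))) * Wb s := by
    rw [Finset.mul_sum, Finset.mul_sum, Finset.sum_mul]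
    apply Finset.sum_congr rfl
    intro j _
    rw [prod_eq_mul_sub_single l a k hk s j]
    field_simp [hsj j]
  refine total.congr_deriv ?_
  rw [e1, e2]
  simp only [chiIntegrand]
  have e3 : ∑ j, ((c j : ℂ) + (k j : ℕ)) *
        ((∏ i, (s - starRingEnd ℂ (a i)) ^ ((k - Pi.single j 1 : Fin l → ℕ) i)) * Wb s *
          Complex.exp (-(z * s)))
      = ((∑ j, ((c j : ℂ) *
            ∏ i, (s - starRingEnd ℂ (a i)) ^ ((k - Pi.single j 1 : Fin l → ℕ) i)))
          + (∑ j, ((k j : ℂ) *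
            ∏ i, (s - starRingEnd ℂ (a i)) ^ ((k - Pi.single j 1 : Fin l → ℕ) i)))) *
          (Wb s * Complex.exp (-(z * s))) := by
    rw [← Finset.sum_add_distrib, Finset.sum_mul]
    apply Finset.sum_congr rfl
    intro j _
    ring
  rw [e3, Pi.mul_apply]
  ring

include hl ha0 hc hW hWabs hWb in
lemma chiIntegrand_continuousAt (m : Fin l → ℕ) (z s : ℂ)
    (hs : (starRingEnd ℂ) s ∉ cutSet l a) :
    ContinuousAt (chiIntegrand l a Wb m z) s := by
  apply ContinuousAt.mul
  apply ContinuousAt.mul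
  · exact (continuous_finset_prod _ fun j _ =>
      ((continuous_id.sub continuous_const).pow _)).continuousAt
  · exact (Wb_hasDerivAt l hl a ha0 c hc W hW hWabs Wb hWb s hs).continuousAt
  · exact (Complex.continuous_exp.comp ((continuous_const.mul continuous_id).neg)).continuousAt

include hWabs hWb in
lemma chiIntegrand_norm (m : Fin l → ℕ) (z s : ℂ)
    (hs : (starRingEnd ℂ) s ∉ cutSet l a) :
    Complex.abs (chiIntegrand l a Wb m z s)
      = (∏ j, Complex.abs (s - starRingEnd ℂ (a j)) ^ (m j)) *
        (∏ j, (Complex.abs (s - starRingEnd ℂ (a j))) ^ (c j)) *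
        Real.exp (-(z * s)).re := by
  simp only [chiIntegrand, map_mul, Complex.abs_exp]
  congr 1
  congr 1
  · rw [map_prod]
    apply Finset.prod_congr rfl
    intro j _
    rw [map_pow]
  · rw [hWb s]
    rw [show Complex.abs ((starRingEnd ℂ) (W ((starRingEnd ℂ) s)))
        = Complex.abs (W ((starRingEnd ℂ) s)) from Complex.abs_conj _]
    rw [hWabs _ hs]
    apply Finset.prod_congr rfl
    intro j _
    congr 1
    rw [show (starRingEnd ℂ) s - a j = (starRingEnd ℂ) (s - (starRingEnd ℂ) (a j)) by
      rw [map_sub, Complex.conj_conj]]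
    exact Complex.abs_conj _

end Helpers

/-- Lemma 2: the recurrence
`z · χ̃_k(z) = Σ_j (c_j + k_j) · χ̃_{k-e_j}(z)` for multi-indices with all
entries `≥ 1`, obtained by integrating the total derivative
`∂_s[∏_j (s-ā_j)^(c_j+k_j) e^{-zs}]` along the contour. -/
theorem chiTilde_recurrence
    (l : ℕ) (hl : 0 < l) (a : Fin l → ℂ) (ha0 : ∀ i, a i ≠ 0)
    (ha : Function.Injective fun i => Complex.arg (a i))
    (c : Fin l → ℝ) (hc : ∀ i, 0 < c i)
    (W : ℂ → ℂ) (hW : DifferentiableOn ℂ W (cutSet l a)ᶜ)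
    (hWabs : ∀ z ∉ cutSet l a,
      ‖W z‖ = ∏ j, (‖z - a j‖) ^ (c j))
    (Wb : ℂ → ℂ) (hWb : ∀ s, Wb s = starRingEnd ℂ (W (starRingEnd ℂ s)))
    (z : ℂ) (hz : z ≠ 0)
    (hpath : ∀ s : ℂ,
      (s ∈ segment ℝ (starRingEnd ℂ (a ⟨0, hl⟩)) (starRingEnd ℂ z) ∨
        ∃ t : ℝ, 1 ≤ t ∧ s = starRingEnd ℂ z * t) →
      s ≠ starRingEnd ℂ (a ⟨0, hl⟩) →
      ∀ j, ∀ t : ℝ, 1 ≤ t → s ≠ starRingEnd ℂ (a j) * t)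
    (k : Fin l → ℕ) (hk : ∀ j, 1 ≤ k j) :
    z * chiTilde l a W Wb (starRingEnd ℂ (a ⟨0, hl⟩)) k z =
      ∑ j, ((c j : ℂ) + (k j : ℕ)) *
        chiTilde l a W Wb (starRingEnd ℂ (a ⟨0, hl⟩)) (k - Pi.single j 1) z := by
  classical
  set ab1 : ℂ := starRingEnd ℂ (a ⟨0, hl⟩) with hab1def
  set zb : ℂ := starRingEnd ℂ z with hzbdef
  -- every point of the contour other than `ab1` has conjugate off the cut set
  have hcontour : ∀ s : ℂ,
      (s ∈ segment ℝ ab1 zb ∨ ∃ t : ℝ, 1 ≤ t ∧ s = zb * t) → s ≠ ab1 →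
      (starRingEnd ℂ) s ∉ cutSet l a := by
    intro s hmem hne hmemcut
    rw [cutSet, Set.mem_iUnion] at hmemcut
    obtain ⟨j, t, ht, hst⟩ := hmemcut
    have hs' : s = starRingEnd ℂ (a j) * t := by
      have h2 := congrArg (starRingEnd ℂ) hst
      rwa [Complex.conj_conj, map_mul, Complex.conj_ofReal] at h2
    exact hpath s hmem hne j t ht hs'
  have hzne : zb ≠ 0 := by
    intro h
    apply hz
    have := congrArg (starRingEnd ℂ) h
    rwa [hzbdef, Complex.conj_conj, map_zero] at this
  have hzbne : zb ≠ ab1 := by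
    intro h
    have hne2 : zb * ((2:ℝ):ℂ) ≠ ab1 := by
      intro h3
      apply hzne
      rw [← h] at h3
      push_cast at h3
      linear_combination h3
    exact hpath (zb * ((2:ℝ):ℂ)) (Or.inr ⟨2, one_le_two, rfl⟩) hne2 ⟨0, hl⟩ 2 one_le_two
      (by rw [← hab1def, ← h])
  have hrayne : ∀ t : ℝ, 1 ≤ t → zb * (t:ℂ) ≠ ab1 := by
    intro t ht h
    have htpos : (0:ℝ) < t := lt_of_lt_of_le one_pos ht
    have hne' : zb * ((t+1 : ℝ):ℂ) ≠ ab1 := by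
      intro h2
      apply hzne
      rw [← h] at h2
      push_cast at h2
      linear_combination h2
    refine hpath (zb * ((t+1:ℝ):ℂ)) (Or.inr ⟨t+1, by linarith, rfl⟩) hne' ⟨0, hl⟩
      ((t+1)/t) (by rw [le_div_iff₀ htpos]; linarith) ?_
    rw [← hab1def, ← h]
    have htne : (t:ℂ) ≠ 0 := Complex.ofReal_ne_zero.mpr (ne_of_gt htpos)
    push_cast
    field_simp
  have hsegmem : ∀ t : ℝ, 0 ≤ t → t ≤ 1 →
      ab1 + (t:ℂ) * (zb - ab1) ∈ segment ℝ ab1 zb := by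
    intro t h0 h1
    refine ⟨1 - t, t, by linarith, h0, by ring, ?_⟩
    simp only [Complex.real_smul]
    push_cast
    ring
  have hsegne : ∀ t : ℝ, 0 < t → ab1 + (t:ℂ) * (zb - ab1) ≠ ab1 := by
    intro t h0 h
    have h2 : ((t:ℝ):ℂ) * (zb - ab1) = 0 := by linear_combination h
    rcases mul_eq_zero.mp h2 with h' | h'
    · exact (Complex.ofReal_ne_zero.mpr (ne_of_gt h0)) h'
    · exact hzbne (sub_eq_zero.mp h')
  have hsegcut : ∀ t : ℝ, 0 < t → t ≤ 1 →
      (starRingEnd ℂ) (ab1 + (t:ℂ) * (zb - ab1)) ∉ cutSet l a :=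
    fun t h0 h1 => hcontour _ (Or.inl (hsegmem t h0.le h1)) (hsegne t h0)
  have hraycut : ∀ t : ℝ, 1 ≤ t → (starRingEnd ℂ) (zb * (t:ℂ)) ∉ cutSet l a :=
    fun t ht => hcontour _ (Or.inr ⟨t, ht, rfl⟩) (hrayne t ht)
  -- continuity of the explicit norm bound on the segment
  have hγcont : Continuous (fun t : ℝ => ab1 + (t:ℂ) * (zb - ab1)) :=
    continuous_const.add (Complex.continuous_ofReal.mul continuous_const)
  have hBcont : ∀ m : Fin l → ℕ, Continuous (fun t : ℝ =>
      (∏ j, Complex.abs ((ab1 + (t:ℂ) * (zb - ab1)) - starRingEnd ℂ (a j)) ^ (m j)) *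
      (∏ j, (Complex.abs ((ab1 + (t:ℂ) * (zb - ab1)) - starRingEnd ℂ (a j))) ^ (c j)) *
      Real.exp (-(z * (ab1 + (t:ℂ) * (zb - ab1)))).re) := by
    intro m
    have habsj : ∀ j : Fin l, Continuous (fun t : ℝ =>
        Complex.abs ((ab1 + (t:ℂ) * (zb - ab1)) - starRingEnd ℂ (a j))) := fun j =>
      Complex.continuous_abs.comp (hγcont.sub continuous_const)
    apply Continuous.mul
    apply Continuous.mul
    · exact continuous_finset_prod _ fun j _ => (habsj j).pow (m j)
    · exact continuous_finset_prod _ fun j _ =>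
        (habsj j).rpow_const (fun x => Or.inr (hc j).le)
    · exact Real.continuous_exp.comp
        (Complex.continuous_re.comp ((continuous_const.mul hγcont).neg))
  -- interval integrability on the segment
  have hsegint : ∀ m : Fin l → ℕ,
      IntervalIntegrable (fun t : ℝ => chiIntegrand l a Wb m z (ab1 + (t:ℂ) * (zb - ab1)))
        volume 0 1 := by
    intro m
    rw [intervalIntegrable_iff_integrableOn_Ioc_of_le zero_le_one]
    obtain ⟨M, hM⟩ := (isCompact_Icc (a := (0:ℝ)) (b := 1)).exists_bound_of_continuousOn
      (hBcont m).continuousOn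
    constructor
    · apply ContinuousOn.aestronglyMeasurable _ measurableSet_Ioc
      intro t ht
      have hca := (chiIntegrand_continuousAt l hl a ha0 c hc W hW hWabs Wb hWb m z _
        (hsegcut t ht.1 ht.2)).comp (x := t) hγcont.continuousAt
      exact hca.continuousWithinAt
    · apply MeasureTheory.HasFiniteIntegral.of_bounded (C := M)
      rw [ae_restrict_iff' measurableSet_Ioc]
      apply Filter.Eventually.of_forall
      intro t ht
      rw [Complex.norm_eq_abs,
        chiIntegrand_norm l a c W hWabs Wb hWb m z _ (hsegcut t ht.1 ht.2)]
      exact le_trans (le_abs_self _) (hM t ⟨ht.1.le, ht.2⟩)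
  -- ray estimates
  set b : ℝ := Complex.normSq z with hbdef
  have hb : 0 < b := Complex.normSq_pos.mpr hz
  have hraybound : ∀ m : Fin l → ℕ, ∀ t : ℝ, 1 ≤ t →
      ‖chiIntegrand l a Wb m z (zb * (t:ℂ))‖ ≤
        ((∏ j, (Complex.abs z + Complex.abs (a j)) ^ (m j)) *
         (∏ j, (Complex.abs z + Complex.abs (a j)) ^ (c j))) *
        (t ^ (((∑ j, m j : ℕ) : ℝ) + ∑ j, c j) * Real.exp (-(b * t))) := by
    intro m t ht
    have htpos : (0:ℝ) < t := lt_of_lt_of_le one_pos ht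
    have hfac : ∀ j : Fin l, Complex.abs (zb * (t:ℂ) - starRingEnd ℂ (a j))
        ≤ (Complex.abs z + Complex.abs (a j)) * t := by
      intro j
      calc Complex.abs (zb * (t:ℂ) - starRingEnd ℂ (a j))
          ≤ Complex.abs (zb * (t:ℂ)) + Complex.abs (starRingEnd ℂ (a j)) := by
            rw [← Complex.norm_eq_abs, ← Complex.norm_eq_abs, ← Complex.norm_eq_abs]
            exact norm_sub_le _ _
        _ = Complex.abs z * t + Complex.abs (a j) := by
            rw [map_mul, Complex.abs_ofReal, hzbdef, Complex.abs_conj, Complex.abs_conj,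
              abs_of_pos htpos]
        _ ≤ Complex.abs z * t + Complex.abs (a j) * t := by
            nlinarith [Complex.abs.nonneg (a j)]
        _ = (Complex.abs z + Complex.abs (a j)) * t := by ring
    rw [Complex.norm_eq_abs, chiIntegrand_norm l a c W hWabs Wb hWb m z _ (hraycut t ht)]
    have hexp : (-(z * (zb * (t:ℂ)))).re = -(b * t) := by
      have hzzb : z * (zb * (t:ℂ)) = ((b * t : ℝ) : ℂ) := by
        rw [hzbdef, ← mul_assoc, Complex.mul_conj, hbdef]
        push_cast
        ring
      rw [hzzb, ← Complex.ofReal_neg, Complex.ofReal_re]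
    rw [hexp]
    have h1 : (∏ j, Complex.abs (zb * (t:ℂ) - starRingEnd ℂ (a j)) ^ (m j))
        ≤ (∏ j, (Complex.abs z + Complex.abs (a j)) ^ (m j)) * t ^ (((∑ j, m j : ℕ)):ℝ) := by
      rw [Real.rpow_natCast, ← Finset.prod_pow_eq_pow_sum, ← Finset.prod_mul_distrib]
      apply Finset.prod_le_prod
      · intro j _; positivity
      · intro j _
        rw [← mul_pow]
        exact pow_le_pow_left₀ (Complex.abs.nonneg _) (hfac j) _
    have h2 : (∏ j, (Complex.abs (zb * (t:ℂ) - starRingEnd ℂ (a j))) ^ (c j))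
        ≤ (∏ j, (Complex.abs z + Complex.abs (a j)) ^ (c j)) * t ^ (∑ j, c j) := by
      rw [Real.rpow_sum_of_pos htpos, ← Finset.prod_mul_distrib]
      apply Finset.prod_le_prod
      · intro j _; positivity
      · intro j _
        rw [← Real.mul_rpow (by positivity) htpos.le]
        exact Real.rpow_le_rpow (Complex.abs.nonneg _) (hfac j) (hc j).le
    have hsplit : (t:ℝ) ^ ((((∑ j, m j : ℕ)) : ℝ) + ∑ j, c j)
        = t ^ (((∑ j, m j : ℕ)):ℝ) * t ^ (∑ j, c j) := Real.rpow_add htpos _ _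
    calc (∏ j, Complex.abs (zb * (t:ℂ) - starRingEnd ℂ (a j)) ^ (m j)) *
          (∏ j, (Complex.abs (zb * (t:ℂ) - starRingEnd ℂ (a j))) ^ (c j)) *
          Real.exp (-(b * t))
        ≤ ((∏ j, (Complex.abs z + Complex.abs (a j)) ^ (m j)) * t ^ (((∑ j, m j : ℕ)):ℝ)) *
          ((∏ j, (Complex.abs z + Complex.abs (a j)) ^ (c j)) * t ^ (∑ j, c j)) *
            Real.exp (-(b * t)) := by
          apply mul_le_mul_of_nonneg_right _ (Real.exp_pos _).le
          exact mul_le_mul h1 h2 (by positivity) (by positivity)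
      _ = ((∏ j, (Complex.abs z + Complex.abs (a j)) ^ (m j)) *
            (∏ j, (Complex.abs z + Complex.abs (a j)) ^ (c j))) *
          (t ^ ((((∑ j, m j : ℕ)) : ℝ) + ∑ j, c j) * Real.exp (-(b * t))) := by
          rw [hsplit]; ring
  have hraycont : ∀ m : Fin l → ℕ,
      ContinuousOn (fun t : ℝ => chiIntegrand l a Wb m z (zb * (t:ℂ))) (Set.Ici 1) := by
    intro m t ht
    have hca := (chiIntegrand_continuousAt l hl a ha0 c hc W hW hWabs Wb hWb m z _
      (hraycut t ht)).comp (x := t)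
      ((continuous_const.mul Complex.continuous_ofReal).continuousAt)
    exact hca.continuousWithinAt
  have hrayint : ∀ m : Fin l → ℕ,
      IntegrableOn (fun t : ℝ => chiIntegrand l a Wb m z (zb * (t:ℂ))) (Set.Ioi 1) := by
    intro m
    have hstep2 : (fun t : ℝ => ((∏ j, (Complex.abs z + Complex.abs (a j)) ^ (m j)) *
         (∏ j, (Complex.abs z + Complex.abs (a j)) ^ (c j))) *
        (t ^ (((∑ j, m j : ℕ) : ℝ) + ∑ j, c j) * Real.exp (-(b * t)))) =o[Filter.atTop]
        (fun t : ℝ => Real.exp (-(b/2) * t)) := by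
      rw [Asymptotics.isLittleO_iff_tendsto' (by
        filter_upwards with t h
        exact absurd h (Real.exp_ne_zero _))]
      have heq : ∀ t : ℝ, ((∏ j, (Complex.abs z + Complex.abs (a j)) ^ (m j)) *
            (∏ j, (Complex.abs z + Complex.abs (a j)) ^ (c j))) *
            (t ^ (((∑ j, m j : ℕ) : ℝ) + ∑ j, c j) * Real.exp (-(b * t)))
            / Real.exp (-(b/2) * t)
          = ((∏ j, (Complex.abs z + Complex.abs (a j)) ^ (m j)) *
            (∏ j, (Complex.abs z + Complex.abs (a j)) ^ (c j))) *
            (t ^ (((∑ j, m j : ℕ) : ℝ) + ∑ j, c j) * Real.exp (-(b/2) * t)) := by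
        intro t
        rw [mul_div_assoc, mul_div_assoc, ← Real.exp_sub,
          show -(b*t) - -(b/2)*t = -(b/2)*t by ring]
      simp only [heq]
      have := (tendsto_rpow_mul_exp_neg_mul_atTop_nhds_zero
        ((((∑ j, m j : ℕ)) : ℝ) + ∑ j, c j) (b/2) (by positivity)).const_mul
        ((∏ j, (Complex.abs z + Complex.abs (a j)) ^ (m j)) *
         (∏ j, (Complex.abs z + Complex.abs (a j)) ^ (c j)))
      simp only [neg_mul, mul_zero] at this ⊢
      simpa using this
    have hO : (fun t : ℝ => ‖chiIntegrand l a Wb m z (zb * (t:ℂ))‖) =O[Filter.atTop]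
        (fun t : ℝ => Real.exp (-(b/2) * t)) := by
      apply Asymptotics.IsBigO.trans _ hstep2.isBigO
      rw [Asymptotics.isBigO_iff]
      refine ⟨1, ?_⟩
      filter_upwards [Filter.eventually_ge_atTop (1:ℝ)] with t ht
      rw [one_mul, Real.norm_eq_abs, Real.norm_eq_abs, abs_of_nonneg (norm_nonneg _)]
      exact le_trans (hraybound m t ht) (le_abs_self _)
    have hnormint := integrable_of_isBigO_exp_neg (by positivity : (0:ℝ) < b/2)
      (hraycont m).norm hO
    exact Integrable.mono' hnormint
      (((hraycont m).mono Set.Ioi_subset_Ici_self).aestronglyMeasurable measurableSet_Ioi)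
      (Filter.Eventually.of_forall fun t => le_refl _)
  have htail : Filter.Tendsto (fun t : ℝ => chiIntegrand l a Wb k z (zb * (t:ℂ)))
      Filter.atTop (nhds 0) := by
    apply squeeze_zero_norm' (a := fun t : ℝ =>
      ((∏ j, (Complex.abs z + Complex.abs (a j)) ^ (k j)) *
       (∏ j, (Complex.abs z + Complex.abs (a j)) ^ (c j))) *
      (t ^ (((∑ j, k j : ℕ) : ℝ) + ∑ j, c j) * Real.exp (-(b * t))))
    · filter_upwards [Filter.eventually_ge_atTop (1:ℝ)] with t ht
      exact hraybound k t ht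
    · have := (tendsto_rpow_mul_exp_neg_mul_atTop_nhds_zero
        ((((∑ j, k j : ℕ)) : ℝ) + ∑ j, c j) b hb).const_mul
        ((∏ j, (Complex.abs z + Complex.abs (a j)) ^ (k j)) *
         (∏ j, (Complex.abs z + Complex.abs (a j)) ^ (c j)))
      simp only [neg_mul, mul_zero] at this ⊢
      simpa using this
  -- vanishing at the start point of the contour
  have hzero : ∀ s : ℂ, s = ab1 → chiIntegrand l a Wb k z s = 0 := by
    intro s hs
    have hpr : (∏ j, (s - starRingEnd ℂ (a j)) ^ (k j)) = 0 := by
      apply Finset.prod_eq_zero (Finset.mem_univ (⟨0, hl⟩ : Fin l))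
      rw [hs, ← hab1def, sub_self]
      exact zero_pow (Nat.one_le_iff_ne_zero.mp (hk _))
    simp [chiIntegrand, hpr]
  -- continuity of the integrand along the closed segment
  have hsegcont : ContinuousOn
      (fun t : ℝ => chiIntegrand l a Wb k z (ab1 + (t:ℂ) * (zb - ab1))) (Set.Icc 0 1) := by
    intro t ht
    rcases eq_or_lt_of_le ht.1 with h0 | h0
    · rw [← h0]
      unfold ContinuousWithinAt
      rw [show (fun t : ℝ => chiIntegrand l a Wb k z (ab1 + (t:ℂ) * (zb - ab1))) 0 = 0 from
        hzero _ (by push_cast; ring)]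
      apply squeeze_zero_norm' (a := fun t : ℝ =>
        (∏ j, Complex.abs ((ab1 + (t:ℂ) * (zb - ab1)) - starRingEnd ℂ (a j)) ^ (k j)) *
        (∏ j, (Complex.abs ((ab1 + (t:ℂ) * (zb - ab1)) - starRingEnd ℂ (a j))) ^ (c j)) *
        Real.exp (-(z * (ab1 + (t:ℂ) * (zb - ab1)))).re)
      · filter_upwards [self_mem_nhdsWithin] with u hu
        rcases eq_or_lt_of_le hu.1 with h0' | h0'
        · rw [← h0']
          rw [show chiIntegrand l a Wb k z (ab1 + ((0:ℝ):ℂ) * (zb - ab1)) = 0 from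
            hzero _ (by push_cast; ring), norm_zero]
          positivity
        · rw [Complex.norm_eq_abs,
            chiIntegrand_norm l a c W hWabs Wb hWb k z _ (hsegcut u h0' hu.2)]
      · have h1 := ((hBcont k).tendsto 0).mono_left
          (nhdsWithin_le_nhds (s := Set.Icc (0:ℝ) 1))
        have hB0 : (∏ j, Complex.abs ((ab1 + ((0:ℝ):ℂ) * (zb - ab1)) - starRingEnd ℂ (a j))
              ^ (k j)) = 0 := by
          apply Finset.prod_eq_zero (Finset.mem_univ (⟨0, hl⟩ : Fin l))
          rw [show (ab1 + ((0:ℝ):ℂ) * (zb - ab1)) - starRingEnd ℂ (a ⟨0, hl⟩) = 0 by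
            rw [← hab1def]; push_cast; ring, map_zero]
          exact zero_pow (Nat.one_le_iff_ne_zero.mp (hk _))
        rw [hB0, zero_mul, zero_mul] at h1
        exact h1
    · have hca := (chiIntegrand_continuousAt l hl a ha0 c hc W hW hWabs Wb hWb k z _
        (hsegcut t h0 ht.2)).comp (x := t) hγcont.continuousAt
      exact hca.continuousWithinAt
  -- FTC on the segment
  have hFTCseg : ∫ t in (0:ℝ)..1,
      ((∑ j, ((c j : ℂ) + (k j : ℕ)) *
          chiIntegrand l a Wb (k - Pi.single j 1) z (ab1 + (t:ℂ) * (zb - ab1)))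
        - z * chiIntegrand l a Wb k z (ab1 + (t:ℂ) * (zb - ab1))) * (zb - ab1)
      = chiIntegrand l a Wb k z zb := by
    have hderiv : ∀ t ∈ Set.Ioo (0:ℝ) 1,
        HasDerivWithinAt (fun t : ℝ => chiIntegrand l a Wb k z (ab1 + (t:ℂ) * (zb - ab1)))
          (((∑ j, ((c j : ℂ) + (k j : ℕ)) *
              chiIntegrand l a Wb (k - Pi.single j 1) z (ab1 + (t:ℂ) * (zb - ab1)))
            - z * chiIntegrand l a Wb k z (ab1 + (t:ℂ) * (zb - ab1))) * (zb - ab1))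
          (Set.Ioi t) t := by
      intro t ht
      have hD := chiIntegrand_hasDerivAt l hl a ha0 c hc W hW hWabs Wb hWb k hk z _
        (hsegcut t ht.1 ht.2.le)
      have hin : HasDerivAt (fun w : ℂ => ab1 + w * (zb - ab1)) (zb - ab1) ((t:ℝ):ℂ) := by
        simpa using ((hasDerivAt_id ((t:ℝ):ℂ)).mul_const (zb - ab1)).const_add ab1
      have hcomp := (hD.comp ((t:ℝ):ℂ) hin).comp_ofReal
      exact hcomp.hasDerivWithinAt
    have hsum_seg : IntervalIntegrable (fun t : ℝ => ∑ j, ((c j : ℂ) + (k j : ℕ)) *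
        chiIntegrand l a Wb (k - Pi.single j 1) z (ab1 + (t:ℂ) * (zb - ab1))) volume 0 1 := by
      rw [intervalIntegrable_iff_integrableOn_Ioc_of_le zero_le_one]
      apply integrable_finset_sum
      intro j _
      exact ((intervalIntegrable_iff_integrableOn_Ioc_of_le zero_le_one).mp
        (hsegint (k - Pi.single j 1))).const_mul _
    have hint : IntervalIntegrable (fun t : ℝ =>
        ((∑ j, ((c j : ℂ) + (k j : ℕ)) *
            chiIntegrand l a Wb (k - Pi.single j 1) z (ab1 + (t:ℂ) * (zb - ab1)))
          - z * chiIntegrand l a Wb k z (ab1 + (t:ℂ) * (zb - ab1))) * (zb - ab1))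
        volume 0 1 :=
      (hsum_seg.sub ((hsegint k).const_mul z)).mul_const _
    have h := intervalIntegral.integral_eq_sub_of_hasDeriv_right_of_le zero_le_one
      hsegcont hderiv hint
    rw [h, show ab1 + ((1:ℝ):ℂ) * (zb - ab1) = zb by push_cast; ring,
      hzero (ab1 + ((0:ℝ):ℂ) * (zb - ab1)) (by push_cast; ring), sub_zero]
  -- FTC on the ray
  have hFTCray : ∫ t in Set.Ioi (1:ℝ),
      ((∑ j, ((c j : ℂ) + (k j : ℕ)) *
          chiIntegrand l a Wb (k - Pi.single j 1) z (zb * (t:ℂ)))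
        - z * chiIntegrand l a Wb k z (zb * (t:ℂ))) * zb
      = - chiIntegrand l a Wb k z zb := by
    have hderiv : ∀ t ∈ Set.Ioi (1:ℝ),
        HasDerivAt (fun t : ℝ => chiIntegrand l a Wb k z (zb * (t:ℂ)))
          (((∑ j, ((c j : ℂ) + (k j : ℕ)) *
              chiIntegrand l a Wb (k - Pi.single j 1) z (zb * (t:ℂ)))
            - z * chiIntegrand l a Wb k z (zb * (t:ℂ))) * zb) t := by
      intro t htt
      have hD := chiIntegrand_hasDerivAt l hl a ha0 c hc W hW hWabs Wb hWb k hk z _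
        (hraycut t (le_of_lt htt))
      have hin : HasDerivAt (fun w : ℂ => zb * w) zb ((t:ℝ):ℂ) := by
        simpa using (hasDerivAt_id ((t:ℝ):ℂ)).const_mul zb
      exact (hD.comp ((t:ℝ):ℂ) hin).comp_ofReal
    have hint : IntegrableOn (fun t : ℝ =>
        ((∑ j, ((c j : ℂ) + (k j : ℕ)) *
            chiIntegrand l a Wb (k - Pi.single j 1) z (zb * (t:ℂ)))
          - z * chiIntegrand l a Wb k z (zb * (t:ℂ))) * zb) (Set.Ioi 1) := by
      apply Integrable.mul_const
      apply Integrable.sub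
      · apply integrable_finset_sum
        intro j _
        exact (hrayint (k - Pi.single j 1)).const_mul _
      · exact (hrayint k).const_mul z
    have h := integral_Ioi_of_hasDerivAt_of_tendsto
      ((hraycont k) 1 Set.self_mem_Ici) hderiv hint htail
    rw [h, show zb * ((1:ℝ):ℂ) = zb by push_cast; ring, zero_sub]
  -- linear expansion of the two FTC identities
  have hA : ((∑ j, ((c j : ℂ) + (k j : ℕ)) *
        ∫ t in (0:ℝ)..1, chiIntegrand l a Wb (k - Pi.single j 1) z (ab1 + (t:ℂ) * (zb - ab1)))
      - z * ∫ t in (0:ℝ)..1, chiIntegrand l a Wb k z (ab1 + (t:ℂ) * (zb - ab1))) * (zb - ab1)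
      = chiIntegrand l a Wb k z zb := by
    rw [← hFTCseg, intervalIntegral.integral_mul_const]
    congr 1
    have hsum_seg : IntervalIntegrable (fun t : ℝ => ∑ j, ((c j : ℂ) + (k j : ℕ)) *
        chiIntegrand l a Wb (k - Pi.single j 1) z (ab1 + (t:ℂ) * (zb - ab1))) volume 0 1 := by
      rw [intervalIntegrable_iff_integrableOn_Ioc_of_le zero_le_one]
      apply integrable_finset_sum
      intro j _
      exact ((intervalIntegrable_iff_integrableOn_Ioc_of_le zero_le_one).mp
        (hsegint (k - Pi.single j 1))).const_mul _
    rw [intervalIntegral.integral_sub hsum_seg ((hsegint k).const_mul z)]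
    congr 1
    · rw [Finset.sum_congr rfl (fun j (_ : j ∈ (Finset.univ : Finset (Fin l))) =>
        (intervalIntegral.integral_const_mul ((c j : ℂ) + (k j : ℕ)) _).symm)]
      exact (intervalIntegral.integral_finset_sum (fun j _ =>
        (hsegint (k - Pi.single j 1)).const_mul _)).symm
    · exact (intervalIntegral.integral_const_mul _ _).symm
  have hB : ((∑ j, ((c j : ℂ) + (k j : ℕ)) *
        ∫ t in Set.Ioi (1:ℝ), chiIntegrand l a Wb (k - Pi.single j 1) z (zb * (t:ℂ)))
      - z * ∫ t in Set.Ioi (1:ℝ), chiIntegrand l a Wb k z (zb * (t:ℂ))) * zb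
      = - chiIntegrand l a Wb k z zb := by
    rw [← hFTCray, MeasureTheory.integral_mul_const]
    congr 1
    have hsum_ray : IntegrableOn (fun t : ℝ => ∑ j, ((c j : ℂ) + (k j : ℕ)) *
        chiIntegrand l a Wb (k - Pi.single j 1) z (zb * (t:ℂ))) (Set.Ioi 1) :=
      integrable_finset_sum _ fun j _ => (hrayint (k - Pi.single j 1)).const_mul _
    rw [MeasureTheory.integral_sub hsum_ray ((hrayint k).const_mul z)]
    congr 1
    · rw [Finset.sum_congr rfl (fun j (_ : j ∈ (Finset.univ : Finset (Fin l))) =>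
        (MeasureTheory.integral_const_mul ((c j : ℂ) + (k j : ℕ)) _).symm)]
      exact (MeasureTheory.integral_finset_sum _ (fun j _ =>
        (hrayint (k - Pi.single j 1)).const_mul _)).symm
    · exact (MeasureTheory.integral_const_mul _ _).symm
  -- final assembly
  simp only [chiTilde]
  rw [← hzbdef]
  rw [show (∑ j, ((c j : ℂ) + (k j : ℕ)) *
      (W z * ((∫ t in (0:ℝ)..1,
          chiIntegrand l a Wb (k - Pi.single j 1) z (ab1 + (t:ℂ) * (zb - ab1))) * (zb - ab1) +
        (∫ t in Set.Ioi (1:ℝ),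
          chiIntegrand l a Wb (k - Pi.single j 1) z (zb * (t:ℂ))) * zb)))
      = W z * ((∑ j, ((c j : ℂ) + (k j : ℕ)) *
          ∫ t in (0:ℝ)..1,
            chiIntegrand l a Wb (k - Pi.single j 1) z (ab1 + (t:ℂ) * (zb - ab1))) * (zb - ab1) +
        (∑ j, ((c j : ℂ) + (k j : ℕ)) *
          ∫ t in Set.Ioi (1:ℝ),
            chiIntegrand l a Wb (k - Pi.single j 1) z (zb * (t:ℂ))) * zb) from by
    rw [Finset.sum_congr rfl (fun j (_ : j ∈ Finset.univ) => show
      ((c j : ℂ) + (k j : ℕ)) *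
        (W z * ((∫ t in (0:ℝ)..1,
            chiIntegrand l a Wb (k - Pi.single j 1) z (ab1 + (t:ℂ) * (zb - ab1))) * (zb - ab1) +
          (∫ t in Set.Ioi (1:ℝ),
            chiIntegrand l a Wb (k - Pi.single j 1) z (zb * (t:ℂ))) * zb))
      = W z * ((((c j : ℂ) + (k j : ℕ)) *
            ∫ t in (0:ℝ)..1,
              chiIntegrand l a Wb (k - Pi.single j 1) z (ab1 + (t:ℂ) * (zb - ab1))) * (zb - ab1))
        + W z * ((((c j : ℂ) + (k j : ℕ)) *
            ∫ t in Set.Ioi (1:ℝ),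
              chiIntegrand l a Wb (k - Pi.single j 1) z (zb * (t:ℂ))) * zb) from by ring)]
    rw [Finset.sum_add_distrib, ← Finset.mul_sum, ← Finset.mul_sum,
      ← Finset.sum_mul, ← Finset.sum_mul, ← mul_add]]
  linear_combination (-(W z)) * hA + (-(W z)) * hB
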